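/- Let K be a convex body in ℂⁿ whose orthogonal projection onto every 1-dimensional complex subspace is a closed disk centered at the origin. Then ξ·K = K for every unit complex number ξ. -/

import Mathlib

open scoped Pointwise

local notation "⟪" x ", " y "⟫" => @inner ℂ _ _ x y

def IsConvexBody {n : ℕ} (K : Set (EuclideanSpace ℂ (Fin n))) : Prop :=
  IsCompact K ∧ Convex ℝ K ∧ (interior K).Nonempty

theorem stmt5 {n : ℕ} (K : Set (EuclideanSpace ℂ (Fin n))) (hK : IsConvexBody K)
    (hproj : ∀ L : Submodule ℂ (EuclideanSpace ℂ (Fin n)), Module.finrank ℂ L = 1 →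
      ∃ v : EuclideanSpace ℂ (Fin n), v ∈ L ∧ ‖v‖ = 1 ∧ ∃ r : ℝ, 0 ≤ r ∧
        (fun x => (L.orthogonalProjection x : EuclideanSpace ℂ (Fin n))) '' K
          = {x | ∃ z : ℂ, ‖z‖ ≤ r ∧ x = z • v}) :
    ∀ ξ : ℂ, ‖ξ‖ = 1 → ξ • K = K := by
  -- Key step: K is stable under scalar multiplication by unit complex numbers.
  have key : ∀ ξ : ℂ, ‖ξ‖ = 1 → ∀ x ∈ K, ξ • x ∈ K := by
    intro ξ hξ x hx
    by_contra hmem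
    obtain ⟨f, c, hfK, hfx⟩ :=
      geometric_hahn_banach_closed_point hK.2.1 hK.1.isClosed hmem
    letI : InnerProductSpace ℝ (EuclideanSpace ℂ (Fin n)) := InnerProductSpace.complexToReal
    set u : EuclideanSpace ℂ (Fin n) := (InnerProductSpace.toDual ℝ (EuclideanSpace ℂ (Fin n))).symm f with hu_def
    have hfu : ∀ y : EuclideanSpace ℂ (Fin n), f y = RCLike.re (⟪u, y⟫) := by
      intro y
      rw [← InnerProductSpace.toDual_symm_apply]
      rfl
    have hu : u ≠ 0 := by
      intro h0
      have h1 : f x < c := hfK x hx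
      have h2 : c < f (ξ • x) := hfx
      rw [hfu x, h0] at h1
      rw [hfu (ξ • x), h0] at h2
      simp only [inner_zero_left, map_zero] at h1 h2
      linarith
    set L : Submodule ℂ (EuclideanSpace ℂ (Fin n)) := ℂ ∙ u with hL_def
    have hL : Module.finrank ℂ L = 1 := finrank_span_singleton hu
    obtain ⟨v, hvL, hv1, r, hr0, himg⟩ := hproj L hL
    have hv0 : v ≠ 0 := by
      intro h; rw [h, norm_zero] at hv1; norm_num at hv1
    have hLv : (ℂ ∙ v) = L := by
      apply Submodule.eq_of_le_of_finrank_eq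
      · rw [Submodule.span_le, Set.singleton_subset_iff]; exact hvL
      · rw [finrank_span_singleton hv0, hL]
    have hproj' : ∀ w : EuclideanSpace ℂ (Fin n), (L.orthogonalProjection w : EuclideanSpace ℂ (Fin n)) = ⟪v, w⟫ • v := by
      intro w
      have h := Submodule.starProjection_unit_singleton ℂ hv1 w
      simp only [hLv] at h
      exact h
    -- ⟪v, x⟫ lies in the disk of radius r
    have hx_disk : ‖⟪v, x⟫‖ ≤ r := by
      have : (⟪v, x⟫ • v) ∈ {y : (EuclideanSpace ℂ (Fin n)) | ∃ z : ℂ, ‖z‖ ≤ r ∧ y = z • v} := by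
        rw [← himg]
        exact ⟨x, hx, hproj' x⟩
      obtain ⟨z, hz, hzv⟩ := this
      have : ⟪v, x⟫ = z := smul_left_injective ℂ hv0 hzv
      rwa [this]
    -- hence ξ * ⟪v, x⟫ also lies in the disk, so it is attained by some y ∈ K
    have hξx_disk : ((ξ * ⟪v, x⟫) • v) ∈
        (fun w => (L.orthogonalProjection w : EuclideanSpace ℂ (Fin n))) '' K := by
      rw [himg]
      refine ⟨ξ * ⟪v, x⟫, ?_, rfl⟩
      rw [norm_mul, hξ, one_mul]
      exact hx_disk
    obtain ⟨y, hy, hyproj⟩ := hξx_disk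
    simp only [hproj'] at hyproj
    have hinner : ⟪v, y⟫ = ξ * ⟪v, x⟫ := smul_left_injective ℂ hv0 hyproj
    -- write u = a • v and compare the functional values
    have huv : u ∈ (ℂ ∙ v) := by rw [hLv]; exact Submodule.mem_span_singleton_self u
    obtain ⟨a, ha⟩ := Submodule.mem_span_singleton.mp huv
    have heq : ⟪u, y⟫ = ⟪u, ξ • x⟫ := by
      rw [← ha, inner_smul_left, inner_smul_left, hinner, inner_smul_right]
    have : f y = f (ξ • x) := by rw [hfu y, hfu (ξ • x), heq]
    have h1 : f y < c := hfK y hy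
    have h2 : c < f (ξ • x) := hfx
    linarith
  intro ξ hξ
  apply Set.Subset.antisymm
  · rintro _ ⟨x, hx, rfl⟩
    exact key ξ hξ x hx
  · intro x hx
    have hξ0 : ξ ≠ 0 := by intro h; rw [h, norm_zero] at hξ; norm_num at hξ
    have hinv : ‖ξ⁻¹‖ = 1 := by rw [norm_inv, hξ]; norm_num
    refine ⟨ξ⁻¹ • x, key ξ⁻¹ hinv x hx, ?_⟩
    show ξ • ξ⁻¹ • x = x
    rw [smul_smul, mul_inv_cancel₀ hξ0, one_smul]
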